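/- Right-censored survival data. Let T and C be non-negative random variables on a probability space, with T having common density p with respect to Lebesgue measure and P[T ≥ 1] > 0; set T̃ = min{T, C}, Y_t = 1_{T̃ ≥ t}, and s(t) = p(t)/P[T ≥ t] for t ∈ [0,1) (the hazard rate). Assume that for all t ≥ 0, P[T ≤ t, T ≤ C] = E[∫_0^t s(u) Y_u du]. Then: (i) ∫_0^1 s(t) dt = −log(P[T ≥ 1]); and (ii) for every interval I ⊆ [0,1), Var[∫_I s(t) Y_t dt] ≤ 2 E[∫_I s(t) Y_t dt]. -/

import Mathlib

open MeasureTheory ProbabilityTheory Real Set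
open scoped ENNReal

private lemma aux_log_integral
    (p : ℝ → ℝ) (hpp : ∀ t, 0 ≤ p t) (hint : Integrable p)
    (G : ℝ → ℝ) (hG1 : 0 < G 1)
    (hdiff : ∀ a b : ℝ, a ≤ b → G a - G b = ∫ t in a..b, p t)
    (s : ℝ → ℝ) (hsnn : ∀ t, 0 ≤ s t)
    (hsle : ∀ t ∈ Set.Icc (0:ℝ) 1, ∀ c, 0 < c → c ≤ G t → s t ≤ p t / c)
    (hsge : ∀ t ∈ Set.Icc (0:ℝ) 1, ∀ c, G t ≤ c → p t / c ≤ s t)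
    (hsInt : IntegrableOn s (Set.Icc 0 1) volume) :
    ∫ t in (0:ℝ)..1, s t = Real.log (G 0) - Real.log (G 1) := by
  have hmono : ∀ {a b : ℝ}, a ≤ b → G b ≤ G a := by
    intro a b hab
    have h := hdiff a b hab
    have h2 : 0 ≤ ∫ t in a..b, p t :=
      intervalIntegral.integral_nonneg hab fun u _ => hpp u
    linarith
  have hGpos : ∀ t ∈ Set.Icc (0:ℝ) 1, 0 < G t := fun t ht =>
    lt_of_lt_of_le hG1 (hmono ht.2)
  -- interval integrability on subintervals of [0,1]
  have hsII : ∀ a b : ℝ, 0 ≤ a → a ≤ b → b ≤ 1 → IntervalIntegrable s volume a b := by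
    intro a b ha hab hb1
    have : Set.uIcc a b ⊆ Set.Icc (0:ℝ) 1 := by
      rw [Set.uIcc_of_le hab]
      exact Set.Icc_subset_Icc ha hb1
    exact (hsInt.mono_set this).intervalIntegrable
  -- key per-interval estimate
  have key : ∀ a b : ℝ, 0 ≤ a → a ≤ b → b ≤ 1 →
      |(∫ t in a..b, s t) - (Real.log (G a) - Real.log (G b))| ≤
        (G a - G b) ^ 2 / (G 1) ^ 2 := by
    intro a b ha hab hb1
    have hGa : 0 < G a := hGpos a ⟨ha, hab.trans hb1⟩
    have hGb : 0 < G b := hGpos b ⟨ha.trans hab, hb1⟩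
    have hΔnn : 0 ≤ G a - G b := sub_nonneg.2 (hmono hab)
    have hpII : IntervalIntegrable p volume a b := hint.intervalIntegrable
    -- upper bound on the integral
    have hup : (∫ t in a..b, s t) ≤ (G a - G b) / G b := by
      have hle : ∀ t ∈ Set.Icc a b, s t ≤ p t / G b := by
        intro t ht
        exact hsle t ⟨ha.trans ht.1, ht.2.trans hb1⟩ (G b) hGb (hmono ht.2)
      have := intervalIntegral.integral_mono_on hab (hsII a b ha hab hb1)
        (hpII.div_const _) hle
      rw [intervalIntegral.integral_div] at this
      rw [hdiff a b hab]
      exact this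
    have hlo : (G a - G b) / G a ≤ ∫ t in a..b, s t := by
      have hle : ∀ t ∈ Set.Icc a b, p t / G a ≤ s t := by
        intro t ht
        exact hsge t ⟨ha.trans ht.1, ht.2.trans hb1⟩ (G a) (hmono ht.1)
      have := intervalIntegral.integral_mono_on hab (hpII.div_const _)
        (hsII a b ha hab hb1) hle
      rw [intervalIntegral.integral_div] at this
      rw [hdiff a b hab]
      exact this
    have hlogup : Real.log (G a) - Real.log (G b) ≤ (G a - G b) / G b := by
      rw [← Real.log_div hGa.ne' hGb.ne']
      have := Real.log_le_sub_one_of_pos (x := G a / G b) (by positivity)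
      have h2 : G a / G b - 1 = (G a - G b) / G b := by field_simp
      linarith
    have hloglo : (G a - G b) / G a ≤ Real.log (G a) - Real.log (G b) := by
      have := Real.log_le_sub_one_of_pos (x := G b / G a) (by positivity)
      have h2 : Real.log (G b / G a) = Real.log (G b) - Real.log (G a) :=
        Real.log_div hGb.ne' hGa.ne'
      have h3 : G b / G a - 1 = -((G a - G b) / G a) := by field_simp; ring
      linarith
    have hwidth : (G a - G b) / G b - (G a - G b) / G a ≤ (G a - G b) ^ 2 / G 1 ^ 2 := by
      have h1 : (G a - G b) / G b - (G a - G b) / G a = (G a - G b) ^ 2 / (G a * G b) := by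
        field_simp
      rw [h1]
      apply div_le_div_of_nonneg_left (sq_nonneg _) (by positivity)
      have h2 : G 1 ≤ G a := hmono (hab.trans hb1)
      have h3 : G 1 ≤ G b := hmono hb1
      nlinarith
    rw [abs_sub_le_iff]
    constructor <;> linarith
  -- now the approximation argument
  have main : ∀ ε : ℝ, 0 < ε →
      |(∫ t in (0:ℝ)..1, s t) - (Real.log (G 0) - Real.log (G 1))| ≤ ε := by
    intro ε hε
    set ε' : ℝ := ε * G 1 ^ 2 / (G 0 - G 1 + 1) with hε'def
    have hG01 : G 1 ≤ G 0 := hmono zero_le_one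
    have hε' : 0 < ε' := by
      apply div_pos (by positivity)
      linarith
    set Φ : ℝ → ℝ := fun x => ∫ t in (0:ℝ)..x, p t with hΦdef
    have hΦcont : Continuous Φ := hint.continuous_primitive 0
    have hUC : UniformContinuousOn Φ (Set.Icc 0 1) :=
      isCompact_Icc.uniformContinuousOn_of_continuous hΦcont.continuousOn
    rw [Metric.uniformContinuousOn_iff] at hUC
    obtain ⟨δ, hδ, hδ'⟩ := hUC ε' hε'
    obtain ⟨n, hn⟩ := exists_nat_one_div_lt hδ
    set N : ℕ := n + 1 with hNdef
    have hNpos : (0:ℝ) < N := by positivity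
    set xk : ℕ → ℝ := fun k => (k : ℝ) / N with hxkdef
    have hx0 : xk 0 = 0 := by simp [hxkdef]
    have hxN : xk N = 1 := by simp only [hxkdef]; exact div_self hNpos.ne'
    have hxmono : ∀ k : ℕ, xk k ≤ xk (k + 1) := by
      intro k
      apply (div_le_div_iff_of_pos_right hNpos).mpr
      exact_mod_cast Nat.le_succ k
    have hxmem : ∀ k : ℕ, k ≤ N → xk k ∈ Set.Icc (0:ℝ) 1 := by
      intro k hk
      constructor
      · positivity
      · rw [div_le_one hNpos]
        exact_mod_cast hk
    have hxnn : ∀ k : ℕ, 0 ≤ xk k := fun k => by positivity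
    have hxle1 : ∀ k : ℕ, k ≤ N → xk k ≤ 1 := fun k hk => (hxmem k hk).2
    -- sum of integrals
    have sumint : ∑ k ∈ Finset.range N, ∫ x in xk k..xk (k+1), s x = ∫ x in (0:ℝ)..1, s x := by
      have := intervalIntegral.sum_integral_adjacent_intervals (μ := volume) (f := s)
        (a := xk) (n := N) (fun k hk => hsII _ _ (hxnn k) (hxmono k) (hxle1 (k+1) hk))
      rw [hx0, hxN] at this
      exact this
    have sumlog : ∑ k ∈ Finset.range N, (Real.log (G (xk k)) - Real.log (G (xk (k+1)))) =
        Real.log (G 0) - Real.log (G 1) := by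
      have := Finset.sum_range_sub' (fun k => Real.log (G (xk k))) N
      rw [hx0, hxN] at this
      exact this
    have sumG : ∑ k ∈ Finset.range N, (G (xk k) - G (xk (k+1))) = G 0 - G 1 := by
      have := Finset.sum_range_sub' (fun k => G (xk k)) N
      rw [hx0, hxN] at this
      exact this
    -- each increment is small
    have hsmall : ∀ k : ℕ, k < N → G (xk k) - G (xk (k+1)) ≤ ε' := by
      intro k hk
      have h1 : G (xk k) - G (xk (k+1)) = Φ (xk (k+1)) - Φ (xk k) := by
        rw [hdiff _ _ (hxmono k), hΦdef]
        have := intervalIntegral.integral_interval_sub_left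
          (a := (0:ℝ)) (b := xk (k+1)) (c := xk k)
          hint.intervalIntegrable hint.intervalIntegrable
        simp only [← this]
      have hdist : dist (xk (k+1)) (xk k) < δ := by
        rw [Real.dist_eq, abs_of_nonneg (by linarith [hxmono k])]
        have h3 : xk (k+1) - xk k = 1 / (N:ℝ) := by
          simp only [hxkdef]
          push_cast
          field_simp
          ring
        rw [h3]
        have h4 : (N:ℝ) = (n:ℝ) + 1 := by rw [hNdef]; push_cast; ring
        rw [h4]
        exact hn
      have h2 : dist (Φ (xk (k+1))) (Φ (xk k)) < ε' :=
        hδ' _ (hxmem (k+1) hk) _ (hxmem k (le_of_lt hk)) hdist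
      have h4 : |Φ (xk (k+1)) - Φ (xk k)| < ε' := by rw [← Real.dist_eq]; exact h2
      rw [h1]
      have := le_abs_self (Φ (xk (k+1)) - Φ (xk k))
      linarith
    -- put it together
    rw [← sumint, ← sumlog, ← Finset.sum_sub_distrib]
    calc |∑ k ∈ Finset.range N, ((∫ x in xk k..xk (k+1), s x) -
            (Real.log (G (xk k)) - Real.log (G (xk (k+1)))))|
        ≤ ∑ k ∈ Finset.range N, |(∫ x in xk k..xk (k+1), s x) -
            (Real.log (G (xk k)) - Real.log (G (xk (k+1))))| := Finset.abs_sum_le_sum_abs _ _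
      _ ≤ ∑ k ∈ Finset.range N, (G (xk k) - G (xk (k+1))) * (ε' / G 1 ^ 2) := by
          apply Finset.sum_le_sum
          intro k hk
          rw [Finset.mem_range] at hk
          calc |(∫ x in xk k..xk (k+1), s x) -
                (Real.log (G (xk k)) - Real.log (G (xk (k+1))))|
              ≤ (G (xk k) - G (xk (k+1))) ^ 2 / (G 1) ^ 2 :=
                key _ _ (hxnn k) (hxmono k) (hxle1 (k+1) hk)
            _ ≤ (G (xk k) - G (xk (k+1))) * (ε' / G 1 ^ 2) := by
                have hΔnn : 0 ≤ G (xk k) - G (xk (k+1)) := sub_nonneg.2 (hmono (hxmono k))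
                have := hsmall k hk
                rw [div_eq_mul_one_div, pow_two]
                rw [mul_assoc]
                apply mul_le_mul_of_nonneg_left _ hΔnn
                rw [← div_eq_mul_one_div, div_le_div_iff₀ (by positivity) (by positivity)]
                nlinarith
      _ = (G 0 - G 1) * (ε' / G 1 ^ 2) := by rw [← Finset.sum_mul, sumG]
      _ ≤ ε := by
          rw [hε'def]
          have hpos : (0:ℝ) < G 0 - G 1 + 1 := by linarith
          have heq : (G 0 - G 1) * (ε * G 1 ^ 2 / (G 0 - G 1 + 1) / G 1 ^ 2) =
              ε * ((G 0 - G 1) / (G 0 - G 1 + 1)) := by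
            field_simp
          rw [heq]
          have hle1 : (G 0 - G 1) / (G 0 - G 1 + 1) ≤ 1 := by
            rw [div_le_one hpos]; linarith
          have hnn : 0 ≤ (G 0 - G 1) / (G 0 - G 1 + 1) := div_nonneg (by linarith) (by linarith)
          nlinarith
  have h0 : |(∫ t in (0:ℝ)..1, s t) - (Real.log (G 0) - Real.log (G 1))| ≤ 0 := by
    by_contra h
    push_neg at h
    have := main (|(∫ t in (0:ℝ)..1, s t) - (Real.log (G 0) - Real.log (G 1))| / 2)
      (by linarith)
    linarith
  have := abs_nonneg ((∫ t in (0:ℝ)..1, s t) - (Real.log (G 0) - Real.log (G 1)))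
  have : |(∫ t in (0:ℝ)..1, s t) - (Real.log (G 0) - Real.log (G 1))| = 0 := le_antisymm h0 this
  rw [abs_eq_zero, sub_eq_zero] at this
  exact this




open MeasureTheory ProbabilityTheory Real Set
open scoped ENNReal

/-- **Proposition `P-surv`: right-censored survival data.**
Let `T` have density `p` w.r.t. Lebesgue measure with `P[T ≥ 1] > 0`, let `C` be a
censoring variable, `T̃ = min{T,C}`, `Y_t = 1_{T̃ ≥ t}` the at-risk process, and
`s(t) = p(t)/P[T ≥ t]` the hazard rate.  If for all `t ≥ 0`,
`P[T ≤ t, T ≤ C] = E[∫₀ᵗ s(u) Y_u du]`, then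
(i) `∫₀¹ s(t) dt = −log(P[T ≥ 1])`, and
(ii) for every interval `I ⊆ [0,1)`,
`Var[∫_I s(t) Y_t dt] ≤ 2 E[∫_I s(t) Y_t dt]`. -/
theorem statement19
    {Ω : Type*} [MeasureSpace Ω] [IsProbabilityMeasure (ℙ : Measure Ω)]
    (T C : Ω → ℝ) (hT : Measurable T) (hC : Measurable C)
    (hTpos : ∀ ω, 0 ≤ T ω) (hCpos : ∀ ω, 0 ≤ C ω)
    (p : ℝ → ℝ) (hp : Measurable p) (hppos : ∀ t, 0 ≤ p t)
    (hdens : Measure.map T ℙ = volume.withDensity fun t => ENNReal.ofReal (p t))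
    (hsurv : 0 < (ℙ {ω | 1 ≤ T ω}).toReal)
    (s : ℝ → ℝ) (hs : ∀ t, s t = p t / (ℙ {ω | t ≤ T ω}).toReal)
    (Y : ℝ → Ω → ℝ) (hY : ∀ t ω, Y t ω = if t ≤ min (T ω) (C ω) then 1 else 0)
    (hmean : ∀ t : ℝ, 0 ≤ t →
      (ℙ {ω | T ω ≤ t ∧ T ω ≤ C ω}).toReal = ∫ ω, (∫ u in (0:ℝ)..t, s u * Y u ω) ∂ℙ) :
    ((∫ t in (0:ℝ)..1, s t) = -Real.log ((ℙ {ω | 1 ≤ T ω}).toReal)) ∧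
    ∀ I : Set ℝ, I ⊆ Set.Ico (0:ℝ) 1 → I.OrdConnected →
      variance (fun ω => ∫ t in I, s t * Y t ω) ℙ ≤
        2 * ∫ ω, (∫ t in I, s t * Y t ω) ∂ℙ := by
  -- treat the law of T
  have hTmap : IsProbabilityMeasure (Measure.map T ℙ) := Measure.isProbabilityMeasure_map hT.aemeasurable
  set G : ℝ → ℝ := fun t => (ℙ {ω | t ≤ T ω}).toReal with hGdef
  have hmap : ∀ t : ℝ, ℙ {ω | t ≤ T ω} = (Measure.map T ℙ) (Ici t) := by
    intro t
    rw [Measure.map_apply hT measurableSet_Ici]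
    rfl
  have hμ : ∀ (A : Set ℝ), MeasurableSet A →
      (Measure.map T ℙ) A = ∫⁻ t in A, ENNReal.ofReal (p t) := by
    intro A hA
    rw [hdens, withDensity_apply _ hA]
  have hone : (∫⁻ t, ENNReal.ofReal (p t)) = 1 := by
    rw [← setLIntegral_univ, ← hμ univ MeasurableSet.univ]
    exact measure_univ
  have hpint : Integrable p (volume : Measure ℝ) := by
    refine ⟨hp.aestronglyMeasurable, ?_⟩
    rw [hasFiniteIntegral_iff_ofReal (Filter.Eventually.of_forall hppos), hone]
    exact ENNReal.one_lt_top
  have hIco : ∀ a b : ℝ, ((Measure.map T ℙ) (Ico a b)).toReal = ∫ t in Set.Ico a b, p t := by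
    intro a b
    rw [hμ _ measurableSet_Ico,
      integral_eq_lintegral_of_nonneg_ae (Filter.Eventually.of_forall hppos)
        hp.aestronglyMeasurable.restrict]
  have hdiffG : ∀ a b : ℝ, a ≤ b → G a - G b = ∫ t in a..b, p t := by
    intro a b hab
    have hsplit : (Measure.map T ℙ) (Ici a) =
        (Measure.map T ℙ) (Ico a b) + (Measure.map T ℙ) (Ici b) := by
      rw [← measure_union ?_ measurableSet_Ici, Set.Ico_union_Ici_eq_Ici hab]
      exact Set.disjoint_left.mpr fun x hx hx' => absurd hx' (not_le.mpr hx.2)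
    have h1 : G a = ((Measure.map T ℙ) (Ico a b)).toReal + G b := by
      rw [hGdef]
      simp only
      rw [hmap a, hmap b, hsplit, ENNReal.toReal_add (measure_ne_top _ _) (measure_ne_top _ _)]
    rw [h1, intervalIntegral.integral_of_le hab, integral_Ioc_eq_integral_Ioo,
      ← integral_Ico_eq_integral_Ioo, ← hIco]
    ring
  have hG0 : G 0 = 1 := by
    have huniv : {ω | (0:ℝ) ≤ T ω} = Set.univ := Set.eq_univ_iff_forall.mpr hTpos
    rw [hGdef]
    simp only [huniv, measure_univ, ENNReal.toReal_one]
  have hG1pos : 0 < G 1 := hsurv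
  have hGanti : Antitone G := by
    intro a b hab
    exact ENNReal.toReal_mono (measure_ne_top _ _)
      (measure_mono fun ω (h : b ≤ T ω) => hab.trans h)
  have hGmeas : Measurable G := hGanti.measurable
  have hGnn : ∀ t, 0 ≤ G t := fun t => ENNReal.toReal_nonneg
  have hsnn : ∀ t, 0 ≤ s t := fun t => by rw [hs t]; exact div_nonneg (hppos t) (hGnn t)
  have hsmeas : Measurable s := by
    have : s = fun t => p t / G t := funext fun t => hs t
    rw [this]
    exact hp.div hGmeas
  have hGtpos : ∀ t ∈ Set.Icc (0:ℝ) 1, 0 < G t := fun t ht =>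
    lt_of_lt_of_le hG1pos (hGanti ht.2)
  have hsIcc : IntegrableOn s (Set.Icc 0 1) (volume : Measure ℝ) := by
    have hb : IntegrableOn (fun t => p t * (G 1)⁻¹) (Set.Icc 0 1) (volume : Measure ℝ) :=
      (hpint.mul_const _).integrableOn
    refine hb.mono' hsmeas.aestronglyMeasurable.restrict ?_
    refine (ae_restrict_iff' measurableSet_Icc).mpr (Filter.Eventually.of_forall ?_)
    intro t ht
    rw [Real.norm_eq_abs, abs_of_nonneg (hsnn t), hs t, div_eq_mul_inv]
    exact mul_le_mul_of_nonneg_left (inv_anti₀ hG1pos (hGanti ht.2)) (hppos t)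
  constructor
  · -- part (i)
    have h := aux_log_integral p hppos hpint G hG1pos hdiffG s hsnn
      (fun t ht c hc hcG => by
        rw [hs t]; exact div_le_div_of_nonneg_left (hppos t) hc hcG)
      (fun t ht c hcG => by
        rw [hs t]; exact div_le_div_of_nonneg_left (hppos t) (hGtpos t ht) hcG)
      hsIcc
    rw [hG0, Real.log_one, zero_sub] at h
    exact h
  · -- part (ii)
    intro I hIsub hIconn
    have hImeas : MeasurableSet I := hIconn.measurableSet
    have hIsubIcc : I ⊆ Set.Icc (0:ℝ) 1 := fun x hx => ⟨(hIsub hx).1, (hIsub hx).2.le⟩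
    set m : Ω → ℝ := fun ω => min (T ω) (C ω) with hmdef
    have hmmeas : Measurable m := hT.min hC
    set κ : ℝ → ℝ≥0∞ := fun t => ℙ {ω | t ≤ m ω} with hκdef
    have hκle : ∀ t, κ t ≤ 1 := fun t => prob_le_one
    have hκfin : ∀ t, κ t ≠ ∞ := fun t => ne_top_of_le_ne_top ENNReal.one_ne_top (hκle t)
    have hκmeas : Measurable κ := by
      rw [hκdef]
      exact Antitone.measurable fun a b hab =>
        measure_mono fun ω (h : b ≤ m ω) => hab.trans h
    set q : ℝ → ℝ≥0∞ := fun t => ENNReal.ofReal (s t) with hqdef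
    have hqmeas : Measurable q := hsmeas.ennreal_ofReal
    have hqfin : ∀ t, q t ≠ ∞ := fun t => ENNReal.ofReal_ne_top
    set Ye : ℝ → Ω → ℝ≥0∞ := fun t ω => if t ≤ m ω then 1 else 0 with hYedef
    have hYe01 : ∀ t ω, Ye t ω ≤ 1 := by
      intro t ω
      rw [hYedef]
      dsimp only
      split <;> simp
    have hYeofReal : ∀ t ω, ENNReal.ofReal (Y t ω) = Ye t ω := by
      intro t ω
      rw [hY, hYedef]
      dsimp only
      split <;> simp
    have hYnn : ∀ t ω, 0 ≤ Y t ω := by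
      intro t ω
      rw [hY]
      split <;> norm_num
    have hprodmeas : Measurable (fun x : ℝ × Ω => Ye x.1 x.2) := by
      rw [hYedef]
      exact Measurable.ite (measurableSet_le measurable_fst (hmmeas.comp measurable_snd))
        measurable_const measurable_const
    have hFmeas : Measurable (fun x : ℝ × Ω => q x.1 * Ye x.1 x.2) :=
      (hqmeas.comp measurable_fst).mul hprodmeas
    have hYetmeas : ∀ ω, Measurable (fun t => Ye t ω) := by
      intro ω
      rw [hYedef]
      exact Measurable.ite (measurableSet_le measurable_id measurable_const)
        measurable_const measurable_const
    -- the ENNReal-valued version of the random variable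
    set Xe : Ω → ℝ≥0∞ := fun ω => ∫⁻ t in I, q t * Ye t ω with hXedef
    have hXemeas : Measurable Xe :=
      Measurable.lintegral_prod_left (μ := (volume : Measure ℝ).restrict I)
        (f := fun t ω => q t * Ye t ω) hFmeas
    have hMqIcc : (∫⁻ t in Set.Icc (0:ℝ) 1, q t) ≠ ∞ := by
      have h1 : (∫⁻ t in Set.Icc (0:ℝ) 1, q t) = ENNReal.ofReal (∫ t in Set.Icc (0:ℝ) 1, s t) :=
        (ofReal_integral_eq_lintegral_ofReal hsIcc (Filter.Eventually.of_forall hsnn)).symm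
      rw [h1]
      exact ENNReal.ofReal_ne_top
    have hMq : (∫⁻ t in I, q t) ≠ ∞ :=
      ne_top_of_le_ne_top hMqIcc (lintegral_mono' (Measure.restrict_mono hIsubIcc le_rfl) le_rfl)
    have hXele : ∀ ω, Xe ω ≤ ∫⁻ t in I, q t := fun ω =>
      lintegral_mono fun t => mul_le_of_le_one_right' (hYe01 t ω)
    have hXefin : ∀ ω, Xe ω ≠ ∞ := fun ω => ne_top_of_le_ne_top hMq (hXele ω)
    -- representation of X through Xe
    have hYtmeas : ∀ ω, Measurable (fun t => s t * Y t ω) := by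
      intro ω
      apply hsmeas.mul
      have h1 : (fun t => Y t ω) = fun t => if t ≤ m ω then (1:ℝ) else 0 :=
        funext fun t => hY t ω
      rw [h1]
      exact Measurable.ite (measurableSet_le measurable_id measurable_const)
        measurable_const measurable_const
    have hXrepr : ∀ ω, (∫ t in I, s t * Y t ω) = (Xe ω).toReal := by
      intro ω
      rw [integral_eq_lintegral_of_nonneg_ae
        (Filter.Eventually.of_forall fun t => mul_nonneg (hsnn t) (hYnn t ω))
        (hYtmeas ω).aestronglyMeasurable.restrict]
      congr 1
      refine lintegral_congr fun t => ?_
      rw [ENNReal.ofReal_mul (hsnn t), hYeofReal]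
    have hXmeas : Measurable (fun ω => ∫ t in I, s t * Y t ω) := by
      have h1 : (fun ω => ∫ t in I, s t * Y t ω) = fun ω => (Xe ω).toReal := funext hXrepr
      rw [h1]
      exact hXemeas.ennreal_toReal
    -- conversions of the two moments
    have hEX : ∫ ω, (∫ t in I, s t * Y t ω) ∂ℙ = (∫⁻ ω, Xe ω ∂ℙ).toReal := by
      rw [integral_congr_ae (Filter.Eventually.of_forall hXrepr)]
      exact integral_toReal hXemeas.aemeasurable
        (Filter.Eventually.of_forall fun ω => lt_top_iff_ne_top.2 (hXefin ω))
    have hEX2 : ∫ ω, (∫ t in I, s t * Y t ω) ^ 2 ∂ℙ = (∫⁻ ω, (Xe ω) ^ 2 ∂ℙ).toReal := by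
      have hpt : ∀ ω, (∫ t in I, s t * Y t ω) ^ 2 = ((Xe ω) ^ 2).toReal := by
        intro ω
        rw [hXrepr ω, ← ENNReal.toReal_pow]
      rw [integral_congr_ae (Filter.Eventually.of_forall hpt)]
      exact integral_toReal (hXemeas.pow_const 2).aemeasurable
        (Filter.Eventually.of_forall fun ω =>
          lt_top_iff_ne_top.2 (ENNReal.pow_ne_top (hXefin ω)))
    -- Fubini with the ω variable
    have hswapgen : ∀ (J : Set ℝ) (h : ℝ → ℝ≥0∞), Measurable h →
        (∫⁻ ω, (∫⁻ t in J, (q t * h t) * Ye t ω) ∂ℙ) = ∫⁻ t in J, (q t * h t) * κ t := by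
      intro J h hh
      have hunc : Measurable (Function.uncurry fun (ω : Ω) (t : ℝ) => (q t * h t) * Ye t ω) := by
        have h2 : (Function.uncurry fun (ω : Ω) (t : ℝ) => (q t * h t) * Ye t ω) =
            fun x : Ω × ℝ => (q x.2 * h x.2) * Ye x.2 x.1 := rfl
        rw [h2]
        exact ((hqmeas.comp measurable_snd).mul (hh.comp measurable_snd)).mul
          (hprodmeas.comp measurable_swap)
      rw [lintegral_lintegral_swap hunc.aemeasurable]
      refine lintegral_congr fun t => ?_
      rw [lintegral_const_mul _ (by
        rw [hYedef]
        exact Measurable.ite (measurableSet_le measurable_const hmmeas)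
          measurable_const measurable_const)]
      congr 1
      have h1 : (fun ω => Ye t ω) = Set.indicator {ω | t ≤ m ω} (fun _ => (1:ℝ≥0∞)) := by
        funext ω
        rw [Set.indicator_apply, hYedef]
        simp [Set.mem_setOf_eq]
      rw [h1, hκdef]
      exact lintegral_indicator_one (measurableSet_le measurable_const hmmeas)
    have hswap1 : ∫⁻ ω, Xe ω ∂ℙ = ∫⁻ t in I, q t * κ t := by
      have h1 := hswapgen I (fun _ => 1) measurable_const
      simpa only [mul_one] using h1
    -- consequence of the mean identity
    have hqκfinle : ∀ (J : Set ℝ), J ⊆ Set.Icc (0:ℝ) 1 → (∫⁻ t in J, q t * κ t) ≠ ∞ := by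
      intro J hJ
      refine ne_top_of_le_ne_top hMqIcc ?_
      refine le_trans (lintegral_mono fun t => mul_le_of_le_one_right' (hκle t)) ?_
      exact lintegral_mono' (Measure.restrict_mono hJ le_rfl) le_rfl
    have hmean' : ∀ t : ℝ, 0 ≤ t → t ≤ 1 →
        ℙ {ω | T ω ≤ t ∧ T ω ≤ C ω} = ∫⁻ r in Set.Ioc 0 t, q r * κ r := by
      intro t ht ht1
      have hJ : Set.Ioc (0:ℝ) t ⊆ Set.Icc (0:ℝ) 1 := fun x hx => ⟨hx.1.le, hx.2.trans ht1⟩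
      have hfin := hqκfinle _ hJ
      have h0 := hmean t ht
      have hinner : ∀ ω, (∫ u in (0:ℝ)..t, s u * Y u ω) =
          (∫⁻ u in Set.Ioc 0 t, q u * Ye u ω).toReal := by
        intro ω
        rw [intervalIntegral.integral_of_le ht,
          integral_eq_lintegral_of_nonneg_ae
            (Filter.Eventually.of_forall fun u => mul_nonneg (hsnn u) (hYnn u ω))
            (hYtmeas ω).aestronglyMeasurable.restrict]
        congr 1
        exact lintegral_congr fun u => by rw [ENNReal.ofReal_mul (hsnn u), hYeofReal]
      rw [integral_congr_ae (Filter.Eventually.of_forall hinner)] at h0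
      have hmeasfn : Measurable (fun ω => ∫⁻ u in Set.Ioc 0 t, q u * Ye u ω) :=
        Measurable.lintegral_prod_left (μ := (volume : Measure ℝ).restrict (Set.Ioc 0 t))
          (f := fun u ω => q u * Ye u ω) hFmeas
      have hfinfn : ∀ ω, (∫⁻ u in Set.Ioc 0 t, q u * Ye u ω) ≠ ∞ := by
        intro ω
        refine ne_top_of_le_ne_top hMqIcc ?_
        refine le_trans (lintegral_mono fun u => mul_le_of_le_one_right' (hYe01 u ω)) ?_
        exact lintegral_mono' (Measure.restrict_mono hJ le_rfl) le_rfl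
      rw [integral_toReal hmeasfn.aemeasurable
        (Filter.Eventually.of_forall fun ω => lt_top_iff_ne_top.2 (hfinfn ω))] at h0
      have hsw : (∫⁻ ω, (∫⁻ u in Set.Ioc 0 t, q u * Ye u ω) ∂ℙ) =
          ∫⁻ u in Set.Ioc 0 t, q u * κ u := by
        have h1 := hswapgen (Set.Ioc 0 t) (fun _ => 1) measurable_const
        simpa only [mul_one] using h1
      rw [hsw] at h0
      exact (ENNReal.toReal_eq_toReal_iff' (measure_ne_top _ _) hfin).mp h0
    -- the key martingale-type bound
    have hWq : ∀ u ∈ I, (∫⁻ t in Set.Ioc u 1, q t * κ t) ≤ κ u := by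
      intro u hu
      have hu0 : 0 ≤ u := (hIsub hu).1
      have hu1 : u < 1 := (hIsub hu).2
      have hsplit : (∫⁻ r in Set.Ioc (0:ℝ) 1, q r * κ r) =
          (∫⁻ r in Set.Ioc 0 u, q r * κ r) + ∫⁻ r in Set.Ioc u 1, q r * κ r := by
        rw [← Set.Ioc_union_Ioc_eq_Ioc hu0 hu1.le,
          lintegral_union measurableSet_Ioc (Set.Ioc_disjoint_Ioc_of_le le_rfl)]
      have h1 := hmean' 1 zero_le_one le_rfl
      have h2 := hmean' u hu0 hu1.le
      have hincl : {ω | T ω ≤ 1 ∧ T ω ≤ C ω} ⊆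
          {ω | T ω ≤ u ∧ T ω ≤ C ω} ∪ {ω | u ≤ m ω} := by
        intro ω hω
        by_cases hc : T ω ≤ u
        · exact Or.inl ⟨hc, hω.2⟩
        · push_neg at hc
          refine Or.inr ?_
          have : u ≤ m ω := le_min hc.le (hc.le.trans hω.2)
          exact this
      have hle : ℙ {ω | T ω ≤ 1 ∧ T ω ≤ C ω} ≤ ℙ {ω | T ω ≤ u ∧ T ω ≤ C ω} + κ u := by
        refine le_trans (measure_mono hincl) ?_
        refine le_trans (measure_union_le _ _) ?_
        rw [hκdef]
      have hufin : (∫⁻ r in Set.Ioc (0:ℝ) u, q r * κ r) ≠ ∞ :=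
        hqκfinle _ (fun x hx => ⟨hx.1.le, hx.2.trans hu1.le⟩)
      have hfinal : (∫⁻ r in Set.Ioc (0:ℝ) u, q r * κ r) + (∫⁻ r in Set.Ioc u 1, q r * κ r) ≤
          (∫⁻ r in Set.Ioc (0:ℝ) u, q r * κ r) + κ u := by
        rw [← hsplit, ← h1, ← h2]
        exact hle
      exact (ENNReal.add_le_add_iff_left hufin).mp hfinal
    -- the deterministic inner integral
    set Hq : ℝ → ℝ≥0∞ := fun t => ∫⁻ u in I, (if u ≤ t then q u else 0) with hHqdef
    have hHqker : Measurable (fun x : ℝ × ℝ => if x.1 ≤ x.2 then q x.1 else 0) :=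
      Measurable.ite (measurableSet_le measurable_fst measurable_snd)
        (hqmeas.comp measurable_fst) measurable_const
    have hHqmeas : Measurable Hq :=
      Measurable.lintegral_prod_left (μ := (volume : Measure ℝ).restrict I)
        (f := fun u t => if u ≤ t then q u else 0) hHqker
    have hHqle : ∀ t, Hq t ≤ ∫⁻ u in I, q u := fun t =>
      lintegral_mono fun u => by split <;> simp
    have hHqfin : ∀ t, Hq t ≠ ∞ := fun t => ne_top_of_le_ne_top hMq (hHqle t)
    -- pointwise square bound
    have hsq : ∀ ω, (Xe ω) ^ 2 ≤ 2 * ∫⁻ t in I, (q t * Ye t ω) * Hq t := by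
      intro ω
      set g : ℝ → ℝ≥0∞ := fun t => q t * Ye t ω with hgdef
      have hgmeas : Measurable g := hqmeas.mul (hYetmeas ω)
      have hgle : ∀ t, g t ≤ q t := fun t => mul_le_of_le_one_right' (hYe01 t ω)
      have hgfin : ∀ t, g t ≠ ∞ := fun t => ne_top_of_le_ne_top (hqfin t) (hgle t)
      have hIg : (∫⁻ u in I, g u) ≠ ∞ := ne_top_of_le_ne_top hMq (lintegral_mono hgle)
      have e1 : (Xe ω) ^ 2 = ∫⁻ t in I, ∫⁻ u in I, g t * g u := by
        rw [pow_two]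
        calc Xe ω * Xe ω = ∫⁻ t in I, g t * (∫⁻ u in I, g u) :=
              (lintegral_mul_const' _ _ hIg).symm
          _ = ∫⁻ t in I, ∫⁻ u in I, g t * g u :=
              lintegral_congr fun t => (lintegral_const_mul' _ _ (hgfin t)).symm
      have hmAu : ∀ t, Measurable (fun u => if u ≤ t then g t * g u else 0) := by
        intro t
        exact Measurable.ite (measurableSet_le measurable_id measurable_const)
          (measurable_const.mul hgmeas) measurable_const
      have hmAt : Measurable (fun t => ∫⁻ u in I, (if u ≤ t then g t * g u else 0)) := by
        refine Measurable.lintegral_prod_left (μ := (volume : Measure ℝ).restrict I)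
          (f := fun u t => if u ≤ t then g t * g u else 0) ?_
        exact Measurable.ite (measurableSet_le measurable_fst measurable_snd)
          ((hgmeas.comp measurable_snd).mul (hgmeas.comp measurable_fst)) measurable_const
      have e3 : (Xe ω) ^ 2 =
          (∫⁻ t in I, ∫⁻ u in I, (if u ≤ t then g t * g u else 0)) +
          ∫⁻ t in I, ∫⁻ u in I, (if t < u then g t * g u else 0) := by
        rw [e1, ← lintegral_add_left hmAt]
        refine lintegral_congr fun t => ?_
        rw [← lintegral_add_left (hmAu t)]
        refine lintegral_congr fun u => ?_
        rcases le_or_gt u t with h | h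
        · simp [h, not_lt.mpr h]
        · simp [h, not_le.mpr h]
      have hA : (∫⁻ t in I, ∫⁻ u in I, (if u ≤ t then g t * g u else 0)) ≤
          ∫⁻ t in I, g t * Hq t := by
        refine lintegral_mono fun t => ?_
        have h1 : ∀ u, (if u ≤ t then g t * g u else 0) ≤ g t * (if u ≤ t then q u else 0) := by
          intro u
          split_ifs with h
          · exact mul_le_mul_right (hgle u) _
          · simp
        calc (∫⁻ u in I, (if u ≤ t then g t * g u else 0)) ≤
              ∫⁻ u in I, g t * (if u ≤ t then q u else 0) := lintegral_mono h1
          _ = g t * Hq t := lintegral_const_mul' _ _ (hgfin t)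
      have hB : (∫⁻ t in I, ∫⁻ u in I, (if t < u then g t * g u else 0)) ≤
          ∫⁻ u in I, g u * Hq u := by
        have h1 : (∫⁻ t in I, ∫⁻ u in I, (if t < u then g t * g u else 0)) ≤
            ∫⁻ t in I, ∫⁻ u in I, (if t ≤ u then q t * g u else 0) := by
          refine lintegral_mono fun t => lintegral_mono fun u => ?_
          rcases lt_or_ge t u with h | h
          · rw [if_pos h, if_pos h.le]
            exact mul_le_mul_left (hgle t) _
          · rw [if_neg (not_lt.mpr h)]
            exact zero_le
        refine le_trans h1 (le_of_eq ?_)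
        have hunc : Measurable (Function.uncurry fun (t u : ℝ) =>
            if t ≤ u then q t * g u else 0) := by
          exact Measurable.ite (measurableSet_le measurable_fst measurable_snd)
            ((hqmeas.comp measurable_fst).mul (hgmeas.comp measurable_snd)) measurable_const
        rw [lintegral_lintegral_swap hunc.aemeasurable]
        refine lintegral_congr fun u => ?_
        have h2 : ∀ t, (if t ≤ u then q t * g u else 0) = g u * (if t ≤ u then q t else 0) := by
          intro t
          split_ifs with h
          · rw [mul_comm]
          · rw [mul_zero]
        rw [lintegral_congr h2, lintegral_const_mul' _ _ (hgfin u)]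
      calc (Xe ω) ^ 2 = _ := e3
        _ ≤ (∫⁻ t in I, g t * Hq t) + ∫⁻ u in I, g u * Hq u := add_le_add hA hB
        _ = 2 * ∫⁻ t in I, (q t * Ye t ω) * Hq t := by rw [← two_mul]
    -- integrate the square bound and swap
    have hmain : (∫⁻ ω, (Xe ω) ^ 2 ∂ℙ) ≤ 2 * ∫⁻ ω, Xe ω ∂ℙ := by
      have hs1 : (∫⁻ ω, (Xe ω) ^ 2 ∂ℙ) ≤
          2 * ∫⁻ ω, (∫⁻ t in I, (q t * Ye t ω) * Hq t) ∂ℙ := by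
        calc (∫⁻ ω, (Xe ω) ^ 2 ∂ℙ) ≤ ∫⁻ ω, 2 * ∫⁻ t in I, (q t * Ye t ω) * Hq t ∂ℙ :=
              lintegral_mono hsq
          _ = 2 * ∫⁻ ω, (∫⁻ t in I, (q t * Ye t ω) * Hq t) ∂ℙ :=
              lintegral_const_mul' 2 _ ENNReal.ofNat_ne_top
      have hs2 : (∫⁻ ω, (∫⁻ t in I, (q t * Ye t ω) * Hq t) ∂ℙ) =
          ∫⁻ t in I, (q t * Hq t) * κ t := by
        have h1 : (fun ω => ∫⁻ t in I, (q t * Ye t ω) * Hq t) =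
            fun ω => ∫⁻ t in I, (q t * Hq t) * Ye t ω :=
          funext fun ω => lintegral_congr fun t => by ring
        rw [h1]
        exact hswapgen I Hq hHqmeas
      have hs3 : (∫⁻ t in I, (q t * Hq t) * κ t) =
          ∫⁻ u in I, q u * (∫⁻ t in I, (if u ≤ t then q t * κ t else 0)) := by
        have h1 : ∀ t, (q t * Hq t) * κ t =
            ∫⁻ u in I, (if u ≤ t then (q t * κ t) * q u else 0) := by
          intro t
          have h2 : (q t * Hq t) * κ t = (q t * κ t) * Hq t := by ring
          rw [h2, hHqdef]
          dsimp only
          rw [← lintegral_const_mul' _ _ (ENNReal.mul_ne_top (hqfin t) (hκfin t))]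
          refine lintegral_congr fun u => ?_
          split_ifs with h
          · rfl
          · rw [mul_zero]
        rw [lintegral_congr h1]
        have hunc : Measurable (Function.uncurry fun (t u : ℝ) =>
            if u ≤ t then (q t * κ t) * q u else 0) := by
          exact Measurable.ite (measurableSet_le measurable_snd measurable_fst)
            (((hqmeas.comp measurable_fst).mul (hκmeas.comp measurable_fst)).mul
              (hqmeas.comp measurable_snd)) measurable_const
        rw [lintegral_lintegral_swap hunc.aemeasurable]
        refine lintegral_congr fun u => ?_
        have h2 : ∀ t, (if u ≤ t then (q t * κ t) * q u else 0) =
            q u * (if u ≤ t then q t * κ t else 0) := by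
          intro t
          split_ifs with h
          · rw [mul_comm]
          · rw [mul_zero]
        rw [lintegral_congr h2, lintegral_const_mul' _ _ (hqfin u)]
      have hs4 : (∫⁻ u in I, q u * (∫⁻ t in I, (if u ≤ t then q t * κ t else 0))) ≤
          ∫⁻ u in I, q u * κ u := by
        refine lintegral_mono_ae ?_
        rw [ae_restrict_iff' hImeas]
        refine Filter.Eventually.of_forall fun u hu => ?_
        refine mul_le_mul_right ?_ _
        have h1 : (fun t => if u ≤ t then q t * κ t else 0) =
            Set.indicator (Set.Ici u) (fun t => q t * κ t) := by
          funext t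
          rw [Set.indicator_apply]
          simp [Set.mem_Ici]
        calc (∫⁻ t in I, (if u ≤ t then q t * κ t else 0))
            = ∫⁻ t in Set.Ici u ∩ I, q t * κ t := by
              rw [h1, lintegral_indicator measurableSet_Ici,
                Measure.restrict_restrict measurableSet_Ici]
          _ ≤ ∫⁻ t in Set.Ico u 1, q t * κ t := by
              refine lintegral_mono' (Measure.restrict_mono ?_ le_rfl) le_rfl
              exact fun x hx => ⟨hx.1, (hIsub hx.2).2⟩
          _ = ∫⁻ t in Set.Ioc u 1, q t * κ t := by
              rw [Measure.restrict_congr_set Ico_ae_eq_Ioc]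
          _ ≤ κ u := hWq u hu
      calc (∫⁻ ω, (Xe ω) ^ 2 ∂ℙ) ≤
            2 * ∫⁻ ω, (∫⁻ t in I, (q t * Ye t ω) * Hq t) ∂ℙ := hs1
        _ = 2 * ∫⁻ u in I, q u * (∫⁻ t in I, (if u ≤ t then q t * κ t else 0)) := by
            rw [hs2, hs3]
        _ ≤ 2 * ∫⁻ u in I, q u * κ u := mul_le_mul_right hs4 2
        _ = 2 * ∫⁻ ω, Xe ω ∂ℙ := by rw [hswap1]
    -- conclude
    have hE1fin : (∫⁻ ω, Xe ω ∂ℙ) ≠ ∞ := by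
      refine ne_top_of_le_ne_top ?_ (lintegral_mono hXele)
      rw [lintegral_const, measure_univ, mul_one]
      exact hMq
    calc variance (fun ω => ∫ t in I, s t * Y t ω) ℙ
        ≤ ∫ ω, (∫ t in I, s t * Y t ω) ^ 2 ∂ℙ := by
          have h := variance_le_expectation_sq (μ := ℙ)
            (X := fun ω => ∫ t in I, s t * Y t ω) hXmeas.aestronglyMeasurable
          simpa using h
      _ = (∫⁻ ω, (Xe ω) ^ 2 ∂ℙ).toReal := hEX2
      _ ≤ (2 * ∫⁻ ω, Xe ω ∂ℙ).toReal :=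
          ENNReal.toReal_mono (ENNReal.mul_ne_top ENNReal.ofNat_ne_top hE1fin) hmain
      _ = 2 * ∫ ω, (∫ t in I, s t * Y t ω) ∂ℙ := by
          rw [ENNReal.toReal_mul, hEX]
          norm_num
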